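/- arXiv:1201.1256 — 2 statements merged into one kernel-verified Lean document; each statement's English description precedes it below -/
import Mathlib

section
/- Every phase point operator has unit trace: for all u ∈ ZMod d × ZMod d, trace(A_u) = 1. -/
open Matrix Complex

/-- ω = exp(2πi/d). -/
noncomputable def omegaC (d : ℕ) : ℂ := Complex.exp (2 * Real.pi * Complex.I / d)

/-- The clock matrix `Z`, with `Z x x = ω ^ x.val`. -/
noncomputable def Zmat (d : ℕ) : Matrix (ZMod d) (ZMod d) ℂ :=
  Matrix.diagonal (fun x => omegaC d ^ x.val)

/-- The shift matrix `X`, with `X x y = 1` iff `x = y + 1`. -/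
noncomputable def Xmat (d : ℕ) : Matrix (ZMod d) (ZMod d) ℂ :=
  Matrix.of fun x y => if x = y + 1 then 1 else 0

/-- The Heisenberg–Weyl operator `T_a`. -/
noncomputable def TW (d : ℕ) [NeZero d] (a : ZMod d × ZMod d) : Matrix (ZMod d) (ZMod d) ℂ :=
  omegaC d ^ ((-((2 : ZMod d)⁻¹ * a.1 * a.2)).val) • (Zmat d ^ a.1.val * Xmat d ^ a.2.val)

/-- The phase point operator at the origin, `A_0 = (1/d) • ∑ a, T_a`. -/
noncomputable def Apoint0 (d : ℕ) [NeZero d] : Matrix (ZMod d) (ZMod d) ℂ :=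
  (1 / (d : ℂ)) • ∑ a : ZMod d × ZMod d, TW d a

/-- The phase point operator `A_u = T_u * A_0 * T_uᴴ`. -/
noncomputable def Apoint (d : ℕ) [NeZero d] (u : ZMod d × ZMod d) : Matrix (ZMod d) (ZMod d) ℂ :=
  TW d u * Apoint0 d * (TW d u)ᴴ

lemma omegaC_prim (d : ℕ) [NeZero d] : IsPrimitiveRoot (omegaC d) d :=
  Complex.isPrimitiveRoot_exp d (NeZero.ne d)

lemma star_omegaC (d : ℕ) [NeZero d] : star (omegaC d) * omegaC d = 1 := by
  rw [omegaC, Complex.star_def, ← Complex.exp_conj, ← Complex.exp_add]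
  have h : (starRingEnd ℂ) (2 * ↑Real.pi * Complex.I / ↑d)
      = -(2 * ↑Real.pi * Complex.I / ↑d) := by
    simp only [map_div₀, _root_.map_mul, Complex.conj_I, map_ofNat, Complex.conj_ofReal,
      map_natCast]
    ring
  rw [h, neg_add_cancel, Complex.exp_zero]

lemma Xmat_pow (d : ℕ) [NeZero d] (n : ℕ) :
    (Xmat d) ^ n =
      (Matrix.of (fun x y => if x = y + (n : ZMod d) then 1 else 0) :
        Matrix (ZMod d) (ZMod d) ℂ) := by
  induction n with
  | zero => ext x y; simp [Matrix.one_apply]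
  | succ n ih =>
    rw [pow_succ, ih]
    ext x y
    rw [Matrix.mul_apply]
    simp only [Matrix.of_apply, Xmat, mul_ite, mul_one, mul_zero]
    rw [Finset.sum_ite_eq' Finset.univ (y + 1)]
    simp only [Finset.mem_univ, if_true]
    have : y + 1 + (n : ZMod d) = y + ((n + 1 : ℕ) : ZMod d) := by push_cast; ring
    rw [this]

lemma Xpow_unitary (d : ℕ) [NeZero d] (j : ℕ) :
    ((Xmat d) ^ j)ᴴ * (Xmat d) ^ j = 1 := by
  ext x y
  rw [Matrix.mul_apply, Matrix.one_apply]
  simp only [Xmat_pow, Matrix.conjTranspose_apply, Matrix.of_apply, apply_ite (star : ℂ → ℂ),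
    star_one, star_zero, ite_mul, one_mul, zero_mul]
  rw [Finset.sum_ite_eq' Finset.univ (x + (j : ZMod d))]
  simp [add_left_inj]

lemma Zpow_unitary (d : ℕ) [NeZero d] (i : ℕ) :
    ((Zmat d) ^ i)ᴴ * (Zmat d) ^ i = 1 := by
  rw [Zmat, Matrix.diagonal_pow, Matrix.diagonal_conjTranspose, Matrix.diagonal_mul_diagonal]
  rw [show (1 : Matrix (ZMod d) (ZMod d) ℂ) = Matrix.diagonal (fun _ => 1) from
    (Matrix.diagonal_one).symm]
  refine congrArg Matrix.diagonal (funext fun x => ?_)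
  simp only [Pi.star_apply, Pi.pow_apply]
  rw [← pow_mul, star_pow, ← mul_pow, star_omegaC, one_pow]

lemma TW_unitary (d : ℕ) [NeZero d] (u : ZMod d × ZMod d) :
    (TW d u)ᴴ * TW d u = 1 := by
  rw [TW, Matrix.conjTranspose_smul, Matrix.smul_mul, Matrix.mul_smul, smul_smul]
  have hph : star (omegaC d ^ ((-((2 : ZMod d)⁻¹ * u.1 * u.2)).val))
      * omegaC d ^ ((-((2 : ZMod d)⁻¹ * u.1 * u.2)).val) = 1 := by
    rw [star_pow, ← mul_pow, star_omegaC, one_pow]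
  rw [hph, one_smul, Matrix.conjTranspose_mul, Matrix.mul_assoc,
    ← Matrix.mul_assoc ((Zmat d ^ u.1.val)ᴴ), Zpow_unitary, Matrix.one_mul, Xpow_unitary]

lemma sum_pow_val (d : ℕ) [NeZero d] (ζ : ℂ) :
    ∑ x : ZMod d, ζ ^ (ZMod.val x) = ∑ i ∈ Finset.range d, ζ ^ i := by
  refine Finset.sum_nbij' (fun x => ZMod.val x) (fun i => (i : ZMod d)) ?_ ?_ ?_ ?_ ?_
  · intro a _; exact Finset.mem_range.mpr (ZMod.val_lt a)
  · intro a _; exact Finset.mem_univ _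
  · intro a _; exact ZMod.natCast_zmod_val a
  · intro a ha; exact ZMod.val_cast_of_lt (Finset.mem_range.mp ha)
  · intro a _; rfl

lemma geom_sum_omega (d : ℕ) [NeZero d] (k : ℕ) :
    ∑ x : ZMod d, (omegaC d ^ k) ^ (ZMod.val x) =
      if (k : ZMod d) = 0 then (d : ℂ) else 0 := by
  rw [sum_pow_val]
  by_cases h : (k : ZMod d) = 0
  · have hdvd : d ∣ k := (ZMod.natCast_eq_zero_iff k d).mp h
    have h1 : omegaC d ^ k = 1 := ((omegaC_prim d).pow_eq_one_iff_dvd k).mpr hdvd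
    simp [h1, h]
  · have hne : omegaC d ^ k ≠ 1 := by
      intro hc
      exact h ((ZMod.natCast_eq_zero_iff k d).mpr
        (((omegaC_prim d).pow_eq_one_iff_dvd k).mp hc))
    rw [geom_sum_eq hne, if_neg h]
    have hpd : (omegaC d ^ k) ^ d = 1 := by
      rw [← pow_mul, mul_comm, pow_mul, (omegaC_prim d).pow_eq_one, one_pow]
    rw [hpd, sub_self, zero_div]

lemma trace_ZX (d : ℕ) [NeZero d] (i j : ℕ) :
    (Zmat d ^ i * Xmat d ^ j).trace =
      if (i : ZMod d) = 0 ∧ (j : ZMod d) = 0 then (d : ℂ) else 0 := by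
  rw [Zmat, Matrix.diagonal_pow, Xmat_pow, Matrix.trace]
  simp only [Matrix.diag_apply, Matrix.diagonal_mul, Matrix.of_apply, Pi.pow_apply]
  by_cases hj : (j : ZMod d) = 0
  · simp only [hj, add_zero, eq_self_iff_true, if_true, mul_one, and_true]
    calc ∑ x : ZMod d, (omegaC d ^ x.val) ^ i
        = ∑ x : ZMod d, (omegaC d ^ i) ^ (ZMod.val x) := by
          refine Finset.sum_congr rfl fun x _ => ?_
          rw [← pow_mul, ← pow_mul, mul_comm]
      _ = _ := geom_sum_omega d i
  · have hx : ∀ x : ZMod d, ¬ (x = x + (j : ZMod d)) := by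
      intro x hxx
      exact hj (left_eq_add.mp hxx)
    simp [hx, hj]

lemma trace_TW (d : ℕ) [NeZero d] (a : ZMod d × ZMod d) :
    (TW d a).trace = if a = 0 then (d : ℂ) else 0 := by
  rw [TW, Matrix.trace_smul, trace_ZX]
  simp only [ZMod.natCast_zmod_val]
  by_cases h : a = 0
  · subst h
    simp [ZMod.val_zero]
  · rw [if_neg, if_neg h, smul_zero]
    rw [Prod.ext_iff] at h
    push_neg at h ⊢
    by_cases h1 : a.1 = 0
    · exact fun _ => h h1
    · exact fun hc => absurd hc h1

/-- Every phase point operator has unit trace. -/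
theorem phase_point_unit_trace (d : ℕ) [NeZero d] (hodd : Odd d) (hd : 1 < d)
    (u : ZMod d × ZMod d) :
    (Apoint d u).trace = 1 := by
  have hd0 : (d : ℂ) ≠ 0 := Nat.cast_ne_zero.mpr (NeZero.ne d)
  rw [Apoint, Matrix.trace_mul_cycle, TW_unitary, Matrix.one_mul,
    Apoint0, Matrix.trace_smul, Matrix.trace_sum]
  simp only [trace_TW]
  rw [Finset.sum_ite_eq' Finset.univ (0 : ZMod d × ZMod d) (fun _ => (d : ℂ))]
  simp only [Finset.mem_univ, if_true, smul_eq_mul]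
  field_simp
end

section
/- The phase point operators are trace-orthogonal: for all u, v ∈ ZMod d × ZMod d, trace(A_u * A_v) = d if u = v and = 0 otherwise. -/
open Matrix Complex

section
variable (d : ℕ) [NeZero d]

noncomputable def ec (k : ZMod d) : ℂ := omegaC d ^ k.val

lemma omega_prim : IsPrimitiveRoot (omegaC d) d :=
  Complex.isPrimitiveRoot_exp d (NeZero.ne d)

lemma omega_pow_d : omegaC d ^ d = 1 := (omega_prim d).pow_eq_one

lemma omega_pow_natCast (n : ℕ) : omegaC d ^ ((n : ZMod d)).val = omegaC d ^ n := by
  conv_rhs => rw [← Nat.div_add_mod n d]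
  rw [pow_add, pow_mul, omega_pow_d, one_pow, one_mul, ZMod.val_natCast]

lemma ec_add (a b : ZMod d) : ec d (a + b) = ec d a * ec d b := by
  have h : a + b = ((a.val + b.val : ℕ) : ZMod d) := by push_cast [ZMod.natCast_val]; simp
  rw [ec, ec, ec, h, omega_pow_natCast, pow_add]

omit [NeZero d] in
lemma ec_zero : ec d 0 = 1 := by simp [ec]

lemma ec_mul_pow (a b : ZMod d) : ec d (a * b) = (ec d a) ^ b.val := by
  have h : a * b = ((a.val * b.val : ℕ) : ZMod d) := by push_cast [ZMod.natCast_val]; simp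
  rw [ec, ec, h, omega_pow_natCast, pow_mul]

lemma ec_mul_inv (a : ZMod d) : ec d a * ec d (-a) = 1 := by
  rw [← ec_add]; simp [ec_zero]

lemma ec_conj (a : ZMod d) : (starRingEnd ℂ) (ec d a) = ec d (-a) := by
  have hω : (starRingEnd ℂ) (omegaC d) = (omegaC d)⁻¹ := by
    rw [omegaC, ← Complex.exp_conj, ← Complex.exp_neg]
    congr 1
    simp [map_div₀, Complex.conj_ofNat]
    ring
  rw [ec, map_pow, hω, inv_pow, ← ec]
  exact inv_eq_of_mul_eq_one_right (ec_mul_inv d a)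

lemma ec_ne_one {k : ZMod d} (hk : k ≠ 0) : ec d k ≠ 1 := by
  intro h1
  have hdvd := ((omega_prim d).pow_eq_one_iff_dvd k.val).mp h1
  have := ZMod.val_lt k
  rcases Nat.eq_zero_of_dvd_of_lt hdvd this with h
  exact hk (by rwa [← ZMod.val_eq_zero])

lemma sum_ec (k : ZMod d) : ∑ x : ZMod d, ec d (k * x) = if k = 0 then (d : ℂ) else 0 := by
  split_ifs with h
  · simp [h, ec_zero, ZMod.card]
  · have hne : ec d k ≠ 1 := ec_ne_one d h
    have hpd : (ec d k) ^ d = 1 := by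
      rw [ec, ← pow_mul, mul_comm, pow_mul, omega_pow_d, one_pow]
    calc ∑ x : ZMod d, ec d (k * x) = ∑ x : ZMod d, (ec d k) ^ x.val := by
          simp [ec_mul_pow]
      _ = ∑ j ∈ Finset.range d, (ec d k) ^ j := by
          exact Finset.sum_nbij' (fun x => x.val) (fun j => (j : ZMod d))
            (fun a _ => Finset.mem_range.2 (ZMod.val_lt a)) (fun j _ => Finset.mem_univ _)
            (fun a _ => by simp [ZMod.natCast_val, ZMod.cast_id])
            (fun j hj => ZMod.val_natCast_of_lt (Finset.mem_range.1 hj))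
            (fun a _ => rfl)
      _ = 0 := by rw [geom_sum_eq hne, hpd]; simp

end

section
variable (d : ℕ) [NeZero d]

lemma two_unit (hodd : Odd d) : IsUnit (2 : ZMod d) := by
  have : ((2 : ℕ) : ZMod d) = (2 : ZMod d) := by push_cast; ring
  rw [← this]
  exact (ZMod.isUnit_iff_coprime 2 d).2 (Nat.coprime_two_left.2 hodd)

lemma Xmat_pow_apply (n : ℕ) (x y : ZMod d) :
    (Xmat d ^ n) x y = if x = y + (n : ZMod d) then 1 else 0 := by
  induction n generalizing x y with
  | zero => simp [Matrix.one_apply]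
  | succ n ih =>
    rw [pow_succ, Matrix.mul_apply]
    simp only [ih]
    simp only [Xmat, Matrix.of_apply, mul_ite, mul_one, mul_zero, ite_mul, one_mul, zero_mul]
    rw [Finset.sum_ite_eq' Finset.univ (y + 1)]
    simp only [Finset.mem_univ, if_true]
    push_cast
    rw [show y + ((n : ZMod d) + 1) = y + 1 + n by ring]

lemma Zmat_pow_apply (n : ℕ) (x y : ZMod d) :
    (Zmat d ^ n) x y = if x = y then omegaC d ^ (x.val * n) else 0 := by
  rw [Zmat, Matrix.diagonal_pow, Matrix.diagonal_apply]
  simp [pow_mul]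

end

section
variable (d : ℕ) [NeZero d]

lemma TW_apply (a : ZMod d × ZMod d) (x y : ZMod d) :
    TW d a x y = if x = y + a.2 then ec d (-((2 : ZMod d)⁻¹ * a.1 * a.2)) * ec d (a.1 * x) else 0 := by
  rw [TW, Matrix.smul_apply, Matrix.mul_apply]
  simp only [Zmat_pow_apply, Xmat_pow_apply, ite_mul, one_mul, zero_mul, mul_one, mul_zero]
  rw [Finset.sum_ite_eq Finset.univ x]
  simp only [Finset.mem_univ, if_true]
  have hv : ((a.2.val : ℕ) : ZMod d) = a.2 := by simp [ZMod.natCast_val, ZMod.cast_id]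
  rw [hv]
  have he : omegaC d ^ (x.val * a.1.val) = ec d (a.1 * x) := by
    rw [mul_comm a.1 x, ec_mul_pow, ec, ← pow_mul]
  rw [smul_eq_mul]
  split_ifs with h
  · rw [he, mul_one]; rfl
  · simp
end

section
variable (d : ℕ) [NeZero d]

lemma Apoint0_apply (hodd : Odd d) (x y : ZMod d) :
    Apoint0 d x y = if x = -y then 1 else 0 := by
  have h2 : (2 : ZMod d)⁻¹ * 2 = 1 := ZMod.inv_mul_of_unit 2 (two_unit d hodd)
  have hinv : IsUnit ((2 : ZMod d)⁻¹) := IsUnit.of_mul_eq_one 2 h2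
  rw [Apoint0, Matrix.smul_apply, Matrix.sum_apply]
  rw [Fintype.sum_prod_type]
  simp only [TW_apply]
  have hc : ∀ a2 : ZMod d, (x = y + a2) = (a2 = x - y) := fun a2 => propext
    ⟨fun h => by rw [h]; ring, fun h => by rw [h]; ring⟩
  simp only [hc]
  rw [Finset.sum_congr rfl (fun a1 _ => Finset.sum_ite_eq' Finset.univ (x - y)
    (fun a2 => ec d (-((2 : ZMod d)⁻¹ * a1 * a2)) * ec d (a1 * x)))]
  simp only [Finset.mem_univ, if_true]
  have key : ∀ a1 : ZMod d, ec d (-((2 : ZMod d)⁻¹ * a1 * (x - y))) * ec d (a1 * x)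
      = ec d (((2 : ZMod d)⁻¹ * (x + y)) * a1) := by
    intro a1
    rw [← ec_add]
    congr 1
    linear_combination (-(a1 * x)) * h2
  simp only [key]
  rw [sum_ec]
  have hcond : ((2 : ZMod d)⁻¹ * (x + y) = 0) = (x = -y) := by
    apply propext
    rw [hinv.mul_right_eq_zero, add_eq_zero_iff_eq_neg]
  rw [smul_eq_mul]
  simp only [hcond]
  split_ifs with h
  · rw [mul_comm, mul_one_div, div_self (Nat.cast_ne_zero.2 (NeZero.ne d))]
  · rw [mul_zero]

end

section
variable (d : ℕ) [NeZero d]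

lemma ec_star (a : ZMod d) : star (ec d a) = ec d (-a) := ec_conj d a

lemma TW_mul_Apoint0_apply (hodd : Odd d) (u : ZMod d × ZMod d) (x t : ZMod d) :
    (TW d u * Apoint0 d) x t =
      if t = u.2 - x then ec d (-((2 : ZMod d)⁻¹ * u.1 * u.2)) * ec d (u.1 * x) else 0 := by
  rw [Matrix.mul_apply]
  simp only [TW_apply, Apoint0_apply d hodd, ite_mul, zero_mul, mul_ite, mul_zero, mul_one]
  have hc : ∀ s : ZMod d, (x = s + u.2) = (s = x - u.2) := fun s => propext
    ⟨fun h => by rw [h]; ring, fun h => by rw [h]; ring⟩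
  simp only [hc]
  rw [Finset.sum_ite_eq' Finset.univ (-t)]
  simp only [Finset.mem_univ, if_true]
  have : (-t = x - u.2) = (t = u.2 - x) := propext
    ⟨fun h => by linear_combination -h, fun h => by linear_combination -h⟩
  simp only [this]

lemma Apoint_apply (hodd : Odd d) (u : ZMod d × ZMod d) (x y : ZMod d) :
    Apoint d u x y = if x + y = 2 * u.2 then ec d (u.1 * (x - y)) else 0 := by
  rw [Apoint, Matrix.mul_apply]
  simp only [Matrix.conjTranspose_apply, TW_mul_Apoint0_apply d hodd, TW_apply,
    apply_ite (star : ℂ → ℂ), star_zero, star_mul', ec_star, ite_mul, zero_mul,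
    mul_ite, mul_zero]
  have hc : ∀ s : ZMod d, (y = s + u.2) = (s = y - u.2) := fun s => propext
    ⟨fun h => by rw [h]; ring, fun h => by rw [h]; ring⟩
  simp only [hc]
  rw [Finset.sum_ite_eq' Finset.univ (y - u.2)]
  simp only [Finset.mem_univ, if_true]
  have hcond : (y - u.2 = u.2 - x) = (x + y = 2 * u.2) := propext
    ⟨fun h => by linear_combination h, fun h => by linear_combination h⟩
  simp only [hcond]
  split_ifs with h
  · rw [← ec_add, ← ec_add, ← ec_add]
    congr 1
    ring
  · rfl

end

/-- The phase point operators are trace-orthogonal. -/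
theorem phase_point_trace_orthogonal (d : ℕ) [NeZero d] (hodd : Odd d) (hd : 1 < d)
    (u v : ZMod d × ZMod d) :
    (Apoint d u * Apoint d v).trace = if u = v then (d : ℂ) else 0 := by
  have h2u : IsUnit (2 : ZMod d) := two_unit d hodd
  rw [Matrix.trace]
  simp only [Matrix.diag_apply, Matrix.mul_apply, Apoint_apply d hodd]
  have hc1 : ∀ x y : ZMod d, (x + y = 2 * u.2) = (y = 2 * u.2 - x) := fun x y => propext
    ⟨fun h => by linear_combination h, fun h => by linear_combination h⟩
  have hc2 : ∀ x y : ZMod d, (y + x = 2 * v.2) = (y = 2 * v.2 - x) := fun x y => propext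
    ⟨fun h => by linear_combination h, fun h => by linear_combination h⟩
  simp only [hc1, hc2, ite_mul, zero_mul, mul_ite, mul_zero]
  rw [Finset.sum_congr rfl (fun x _ => Finset.sum_ite_eq' Finset.univ (2 * v.2 - x) _)]
  simp only [Finset.mem_univ, if_true]
  by_cases hq : u.2 = v.2
  · simp only [← hq, if_pos rfl]
    set k : ZMod d := 2 * (u.1 - v.1) with hk
    have key : ∀ x : ZMod d, ec d (u.1 * (x - (2 * u.2 - x))) * ec d (v.1 * (2 * u.2 - x - x))
        = ec d (-(k * u.2)) * ec d (k * x) := by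
      intro x
      rw [← ec_add, ← ec_add]
      congr 1
      rw [hk]; ring
    simp only [key, if_true]
    rw [← Finset.mul_sum, sum_ec]
    have hkz : (k = 0) = (u.1 = v.1) := propext ⟨fun h => by
        have h1 : u.1 - v.1 = 0 := by
          rcases h2u.mul_right_eq_zero.mp (hk ▸ h) with h1
          exact h1
        linear_combination h1,
      fun h => by rw [hk, h]; ring⟩
    simp only [hkz]
    by_cases hp : u.1 = v.1
    · have huv : u = v := Prod.ext hp hq
      have hk0 : k = 0 := by rw [hk, hp]; ring
      simp [huv, hp, hk0, ec_zero]
    · have huv : u ≠ v := fun h => hp (by rw [h])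
      simp [hp, huv]
  · have hcond : ∀ x : ZMod d, (2 * v.2 - x = 2 * u.2 - x) = False := by
      intro x
      simp only [eq_iff_iff, iff_false]
      intro h
      have h1 : 2 * u.2 = 2 * v.2 := by linear_combination -h
      exact hq (h2u.mul_left_cancel h1)
    have huv : u ≠ v := fun h => hq (by rw [h])
    simp [hcond, huv]
end
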